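/- Let E be a real inner product space, g ∈ E, ξ ∈ ℝ, and d* > 0. Define U_att : E → ℝ by U_att(p) = (1/2)·ξ·‖p − g‖² if ‖p − g‖ ≤ d*, and U_att(p) = d*·ξ·‖p − g‖ − (1/2)·ξ·(d*)² if ‖p − g‖ > d*. Then U_att is differentiable at every point of E, and its gradient at p equals ξ·(p − g) when ‖p − g‖ ≤ d* and equals (d*·ξ/‖p − g‖)·(p − g) when ‖p − g‖ > d*; in particular the two branch formulas agree on the switching surface ‖p − g‖ = d*, so the attractive force field −∇U_att is well defined and continuous there. -/

import Mathlib

open Filter Topology InnerProductSpace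

/-- Derivative of `t ↦ max (t - c) 0 ^ 2`. -/
lemma maxsq_hasDerivAt (c x : ℝ) :
    HasDerivAt (fun t => max (t - c) 0 ^ 2) (2 * max (x - c) 0) x := by
  rcases lt_trichotomy x c with h | h | h
  · have h0 : (2 : ℝ) * max (x - c) 0 = 0 := by
      rw [max_eq_right (by linarith : x - c ≤ 0)]; ring
    rw [h0]
    refine (hasDerivAt_const x (0 : ℝ)).congr_of_eventuallyEq ?_
    filter_upwards [eventually_lt_nhds h] with t ht
    rw [max_eq_right (by linarith : t - c ≤ 0)]; norm_num
  · subst h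
    have h0 : (2 : ℝ) * max (x - x) 0 = 0 := by simp
    rw [h0, hasDerivAt_iff_tendsto_slope]
    have h3 : Tendsto (fun t : ℝ => |t - x|) (𝓝[≠] x) (𝓝 0) := by
      have hc : Continuous fun t : ℝ => |t - x| := by continuity
      have h4 := hc.tendsto x
      simp only [sub_self, abs_zero] at h4
      exact h4.mono_left nhdsWithin_le_nhds
    apply squeeze_zero_norm' ?_ h3
    · filter_upwards [self_mem_nhdsWithin] with t (ht : t ≠ x)
      have hslope : slope (fun t => max (t - x) 0 ^ 2) x t
          = (max (t - x) 0 ^ 2) / (t - x) := by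
        simp [slope_def_field, div_eq_inv_mul]
      rw [hslope, Real.norm_eq_abs, abs_div]
      rcases le_or_gt t x with h1 | h1
      · rw [max_eq_right (by linarith : t - x ≤ 0)]
        simp [abs_nonneg]
      · rw [max_eq_left (by linarith : (0:ℝ) ≤ t - x)]
        have h2 : (0:ℝ) < t - x := by linarith
        rw [abs_of_pos (pow_pos h2 2), abs_of_pos h2,
          pow_two, mul_div_assoc, div_self (ne_of_gt h2), mul_one]
  · have heq : (2 : ℝ) * max (x - c) 0 = 2 * (x - c) := by
      rw [max_eq_left (by linarith : (0:ℝ) ≤ x - c)]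
    rw [heq]
    have hbase : HasDerivAt (fun t : ℝ => (t - c) ^ 2) (2 * (x - c)) x := by
      have h1 : HasDerivAt (fun t : ℝ => t - c) 1 x := (hasDerivAt_id x).sub_const c
      simpa using h1.fun_pow 2
    refine hbase.congr_of_eventuallyEq ?_
    filter_upwards [eventually_gt_nhds h] with t ht
    rw [max_eq_left (by linarith : (0:ℝ) ≤ t - c)]

/-- Fréchet derivative of the norm at a nonzero point of an inner product space. -/
lemma hasFDerivAt_norm_of_ne {E : Type*} [NormedAddCommGroup E] [InnerProductSpace ℝ E]
    {y : E} (hy : y ≠ 0) :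
    HasFDerivAt (fun x : E => ‖x‖) (‖y‖⁻¹ • innerSL ℝ y) y := by
  have h1 : HasFDerivAt (fun x : E => ‖x‖ ^ 2) (2 • innerSL ℝ y) y :=
    (hasStrictFDerivAt_norm_sq y).hasFDerivAt
  have hpos : (0:ℝ) < ‖y‖ := norm_pos_iff.mpr hy
  have hs : ‖y‖ ^ 2 ≠ 0 := by positivity
  have h2 : HasDerivAt Real.sqrt (1 / (2 * Real.sqrt (‖y‖ ^ 2))) (‖y‖ ^ 2) :=
    Real.hasDerivAt_sqrt hs
  have h3 := h2.comp_hasFDerivAt y h1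
  have hfun : (fun x : E => Real.sqrt (‖x‖ ^ 2)) = fun x : E => ‖x‖ := by
    funext x; rw [Real.sqrt_sq (norm_nonneg x)]
  rw [Function.comp_def, hfun] at h3
  have hEq : ((1 / (2 * Real.sqrt (‖y‖ ^ 2))) • (2 • innerSL ℝ y) : E →L[ℝ] ℝ)
      = ‖y‖⁻¹ • innerSL ℝ y := by
    ext w
    rw [Real.sqrt_sq (norm_nonneg y)]
    simp only [ContinuousLinearMap.smul_apply, innerSL_apply_apply,
      smul_eq_mul]
    field_simp
    ring
  rw [hEq] at h3
  exact h3

/-- The piecewise attractive potential U_att of the APF baseline. -/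
noncomputable def Uatt {E : Type*} [NormedAddCommGroup E] [InnerProductSpace ℝ E]
    (g : E) (ξ dstar : ℝ) (p : E) : ℝ :=
  if ‖p - g‖ ≤ dstar then (1 / 2 : ℝ) * ξ * ‖p - g‖ ^ 2
  else dstar * ξ * ‖p - g‖ - (1 / 2 : ℝ) * ξ * dstar ^ 2

/-- The Huber-type global formula for `Uatt`. -/
lemma Uatt_eq {E : Type*} [NormedAddCommGroup E] [InnerProductSpace ℝ E]
    (g : E) (ξ dstar : ℝ) :
    Uatt g ξ dstar = fun p =>
      (1 / 2 : ℝ) * ξ * ‖p - g‖ ^ 2 - ξ / 2 * max (‖p - g‖ - dstar) 0 ^ 2 := by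
  funext p
  unfold Uatt
  split_ifs with h
  · rw [max_eq_right (by linarith : ‖p - g‖ - dstar ≤ 0)]; ring
  · push_neg at h
    rw [max_eq_left (by linarith : (0:ℝ) ≤ ‖p - g‖ - dstar)]; ring

lemma hasGradientAt_Uatt_aux {E : Type*} [NormedAddCommGroup E] [InnerProductSpace ℝ E]
    [CompleteSpace E] (g : E) (ξ dstar : ℝ) (hd : 0 < dstar) (p : E) :
    HasGradientAt (Uatt g ξ dstar)
      (if ‖p - g‖ ≤ dstar then ξ • (p - g) else (dstar * ξ / ‖p - g‖) • (p - g)) p := by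
  rw [Uatt_eq, hasGradientAt_iff_hasFDerivAt]
  have hsub : HasFDerivAt (fun x : E => x - g) (ContinuousLinearMap.id ℝ E) p :=
    (hasFDerivAt_id p).sub_const g
  have hΦ : HasFDerivAt (fun x : E => (1 / 2 : ℝ) * ξ * ‖x - g‖ ^ 2)
      (((1 / 2 : ℝ) * ξ) • (2 • (innerSL ℝ (p - g)).comp (ContinuousLinearMap.id ℝ E))) p :=
    (hsub.norm_sq).const_mul _
  rcases lt_or_ge ‖p - g‖ dstar with h | h
  · -- strictly inside the near field: the Huber correction vanishes locally
    have hΨ : HasFDerivAt (fun x : E => ξ / 2 * max (‖x - g‖ - dstar) 0 ^ 2)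
        (0 : E →L[ℝ] ℝ) p := by
      refine (hasFDerivAt_const (0 : ℝ) p).congr_of_eventuallyEq ?_
      have hc : Continuous fun x : E => ‖x - g‖ := (continuous_id.sub continuous_const).norm
      filter_upwards [(hc.continuousAt).eventually (eventually_lt_nhds h)] with x hx
      rw [max_eq_right (by linarith : ‖x - g‖ - dstar ≤ 0)]
      norm_num
    have htot := hΦ.sub hΨ
    rw [if_pos (le_of_lt h)]
    have hcl : (((1 / 2 : ℝ) * ξ) •
          (2 • (innerSL ℝ (p - g)).comp (ContinuousLinearMap.id ℝ E))) - (0 : E →L[ℝ] ℝ)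
        = toDual ℝ E (ξ • (p - g)) := by
      ext w
      simp only [ContinuousLinearMap.sub_apply, ContinuousLinearMap.smul_apply,
        ContinuousLinearMap.zero_apply, ContinuousLinearMap.coe_comp', Function.comp_apply,
        ContinuousLinearMap.coe_id', id_eq, innerSL_apply_apply, smul_eq_mul, toDual_apply_apply,
        real_inner_smul_left]
      ring
    rw [← hcl]
    exact htot
  · -- `dstar ≤ ‖p - g‖`: use the chain rule through the (smooth there) norm
    have hne : p - g ≠ 0 := by
      intro h0
      rw [h0, norm_zero] at h
      linarith
    have hN := (hasFDerivAt_norm_of_ne hne).comp p hsub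
    have hΨ0 := (maxsq_hasDerivAt dstar ‖p - g‖).comp_hasFDerivAt p hN
    have hΨ := hΨ0.const_mul (ξ / 2)
    have htot := hΦ.sub hΨ
    have hr : ‖p - g‖ ≠ 0 := norm_ne_zero_iff.mpr hne
    rcases eq_or_lt_of_le h with h2 | h2
    · rw [if_pos (le_of_eq h2.symm)]
      have hmax : max (‖p - g‖ - dstar) 0 = 0 := max_eq_right (by linarith)
      have hcl : (((1 / 2 : ℝ) * ξ) •
            (2 • (innerSL ℝ (p - g)).comp (ContinuousLinearMap.id ℝ E)))
            - (ξ / 2) • ((2 * max (‖p - g‖ - dstar) 0) •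
              ((‖p - g‖⁻¹ • innerSL ℝ (p - g)).comp (ContinuousLinearMap.id ℝ E)))
          = toDual ℝ E (ξ • (p - g)) := by
        ext w
        simp only [hmax, ContinuousLinearMap.sub_apply, ContinuousLinearMap.smul_apply,
          ContinuousLinearMap.coe_comp', Function.comp_apply, ContinuousLinearMap.coe_id',
          id_eq, innerSL_apply_apply, smul_eq_mul, toDual_apply_apply, real_inner_smul_left]
        ring
      rw [← hcl]
      exact htot
    · rw [if_neg (not_le.mpr h2)]
      have hmax : max (‖p - g‖ - dstar) 0 = ‖p - g‖ - dstar := max_eq_left (by linarith)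
      have hcl : (((1 / 2 : ℝ) * ξ) •
            (2 • (innerSL ℝ (p - g)).comp (ContinuousLinearMap.id ℝ E)))
            - (ξ / 2) • ((2 * max (‖p - g‖ - dstar) 0) •
              ((‖p - g‖⁻¹ • innerSL ℝ (p - g)).comp (ContinuousLinearMap.id ℝ E)))
          = toDual ℝ E ((dstar * ξ / ‖p - g‖) • (p - g)) := by
        ext w
        simp only [hmax, ContinuousLinearMap.sub_apply, ContinuousLinearMap.smul_apply,
          ContinuousLinearMap.coe_comp', Function.comp_apply, ContinuousLinearMap.coe_id',
          id_eq, innerSL_apply_apply, smul_eq_mul, toDual_apply_apply, real_inner_smul_left]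
        field_simp
        ring
      rw [← hcl]
      exact htot

/-- U_att is differentiable everywhere, its gradient is ξ·(p − g) in the near field
‖p − g‖ ≤ d* and (d*·ξ/‖p − g‖)·(p − g) in the far field ‖p − g‖ > d*, and the two
branch formulas agree on the switching surface ‖p − g‖ = d*, so the attractive force
field −∇U_att is well defined and continuous there. -/
theorem hasGradientAt_Uatt
    {E : Type*} [NormedAddCommGroup E] [InnerProductSpace ℝ E] [CompleteSpace E]
    (g : E) (ξ : ℝ) (dstar : ℝ) (hd : 0 < dstar) :
    (∀ p : E, DifferentiableAt ℝ (Uatt g ξ dstar) p) ∧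
    (∀ p : E, ‖p - g‖ ≤ dstar → HasGradientAt (Uatt g ξ dstar) (ξ • (p - g)) p) ∧
    (∀ p : E, dstar < ‖p - g‖ →
      HasGradientAt (Uatt g ξ dstar) ((dstar * ξ / ‖p - g‖) • (p - g)) p) ∧
    (∀ p : E, ‖p - g‖ = dstar →
      ξ • (p - g) = (dstar * ξ / ‖p - g‖) • (p - g)) := by
  refine ⟨fun p => ?_, fun p hp => ?_, fun p hp => ?_, fun p hp => ?_⟩
  · exact (hasGradientAt_Uatt_aux g ξ dstar hd p).differentiableAt
  · have h := hasGradientAt_Uatt_aux g ξ dstar hd p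
    rwa [if_pos hp] at h
  · have h := hasGradientAt_Uatt_aux g ξ dstar hd p
    rwa [if_neg (not_le.mpr hp)] at h
  · rw [hp]
    congr 1
    field_simp
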